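/- arXiv:1608.02240 — 7 statements merged into one kernel-verified Lean document; each statement's English description precedes it below -/
import Mathlib

section
/- If T : X → X is nonexpansive, then the closure of the range of Id − T is a convex set. -/
open scoped InnerProductSpace

-- approximate fixed point for strict contractions (no completeness needed)
lemma approx_fixed_point {X : Type*} [NormedAddCommGroup X]
    (f : X → X) (c : ℝ) (hc0 : 0 ≤ c) (hc1 : c < 1)
    (hf : ∀ a b : X, ‖f a - f b‖ ≤ c * ‖a - b‖) (δ : ℝ) (hδ : 0 < δ) :
    ∃ z : X, ‖f z - z‖ ≤ δ := by
  set d := ‖f 0 - 0‖ with hd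
  have key : ∀ n : ℕ, ‖f (f^[n] 0) - f^[n] 0‖ ≤ c ^ n * d := by
    intro n
    induction n with
    | zero => simp [hd]
    | succ n ih =>
      have h1 : f^[n+1] (0 : X) = f (f^[n] 0) := Function.iterate_succ_apply' f n 0
      rw [h1]
      calc ‖f (f (f^[n] 0)) - f (f^[n] 0)‖ ≤ c * ‖f (f^[n] 0) - f^[n] 0‖ := hf _ _
        _ ≤ c * (c ^ n * d) := by nlinarith [pow_nonneg hc0 n, norm_nonneg (f (f^[n] (0:X)) - f^[n] (0:X))]
        _ = c ^ (n+1) * d := by ring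
  have hlim : Filter.Tendsto (fun n : ℕ => c ^ n * d) Filter.atTop (nhds 0) := by
    simpa using (tendsto_pow_atTop_nhds_zero_of_lt_one hc0 hc1).mul_const d
  obtain ⟨n, hn⟩ := (hlim.eventually_lt_const hδ).exists
  exact ⟨f^[n] 0, (key n).trans hn.le⟩

set_option maxHeartbeats 2000000 in
theorem closure_range_displacement_convex
    {X : Type*} [NormedAddCommGroup X] [InnerProductSpace ℝ X]
    (T : X → X) (hT : ∀ x y : X, ‖T x - T y‖ ≤ ‖x - y‖) :
    Convex ℝ (closure (Set.range fun x : X => x - T x)) := by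
  set S := Set.range (fun x : X => x - T x) with hSdef
  -- monotonicity of I - T
  have mono : ∀ p q : X, 0 ≤ ⟪(p - T p) - (q - T q), p - q⟫_ℝ := by
    intro p q
    have h1 : ⟪T p - T q, p - q⟫_ℝ ≤ ‖p - q‖ * ‖p - q‖ :=
      (real_inner_le_norm _ _).trans (mul_le_mul_of_nonneg_right (hT p q) (norm_nonneg _))
    have h2 : (p - T p) - (q - T q) = (p - q) - (T p - T q) := by abel
    rw [h2, inner_sub_left, real_inner_self_eq_norm_mul_norm]
    linarith
  have key : ∀ a b : ℝ, 0 ≤ a → 0 ≤ b → a + b = 1 →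
      ∀ u ∈ S, ∀ v ∈ S, a • u + b • v ∈ closure S := by
    intro a b ha hb hab u hu v hv
    obtain ⟨x, hx⟩ := hu
    obtain ⟨y, hy⟩ := hv
    set w := a • u + b • v with hw
    rw [Metric.mem_closure_iff]
    intro ε hε
    set M : ℝ := ‖x‖ + ‖y‖ + 1 with hM
    set K : ℝ := M * (‖u‖ + ‖v‖ + ‖w‖ + 2) with hK
    have hM0 : 0 < M := by positivity
    have hK0 : 0 < K := by positivity
    obtain ⟨μ, hμ0, hμM, hμK⟩ : ∃ μ : ℝ, 0 < μ ∧ μ * M ≤ ε / 8 ∧ μ * K ≤ ε ^ 2 / 16 := by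
      refine ⟨min (ε / (8 * M)) (ε ^ 2 / (16 * K)), lt_min (by positivity) (by positivity), ?_, ?_⟩
      · have h1 : min (ε / (8 * M)) (ε ^ 2 / (16 * K)) ≤ ε / (8 * M) := min_le_left _ _
        calc min (ε / (8 * M)) (ε ^ 2 / (16 * K)) * M ≤ (ε / (8 * M)) * M := by nlinarith
          _ = ε / 8 := by field_simp
      · have h1 : min (ε / (8 * M)) (ε ^ 2 / (16 * K)) ≤ ε ^ 2 / (16 * K) := min_le_right _ _
        calc min (ε / (8 * M)) (ε ^ 2 / (16 * K)) * K ≤ (ε ^ 2 / (16 * K)) * K := by nlinarith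
          _ = ε ^ 2 / 16 := by field_simp
    obtain ⟨δ, hδ0, hδ1, hδε⟩ : ∃ δ : ℝ, 0 < δ ∧ δ ≤ 1 ∧ δ ≤ ε / 8 :=
      ⟨min 1 (ε / 8), lt_min one_pos (by positivity), min_le_left _ _, min_le_right _ _⟩
    -- approximate fixed point of z ↦ (1+μ)⁻¹ • (T z + w)
    obtain ⟨z, hz⟩ := approx_fixed_point (fun z : X => (1 + μ)⁻¹ • (T z + w)) (1 + μ)⁻¹
      (by positivity)
      (by rw [inv_lt_one_iff₀]; right; linarith)
      (by
        intro p q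
        have : (1 + μ)⁻¹ • (T p + w) - (1 + μ)⁻¹ • (T q + w) = (1 + μ)⁻¹ • (T p - T q) := by
          rw [← smul_sub]; congr 1; abel
        rw [this, norm_smul, Real.norm_eq_abs, abs_of_pos (by positivity)]
        exact mul_le_mul_of_nonneg_left (hT p q) (by positivity))
      (δ / (1 + μ)) (by positivity)
    set e : X := μ • z + (z - T z) - w with he
    have hez : e = -((1 + μ) • ((1 + μ)⁻¹ • (T z + w) - z)) := by
      rw [smul_sub, smul_inv_smul₀ (by positivity)]
      rw [he]
      module
    have hee : ‖e‖ ≤ δ := by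
      rw [hez, norm_neg, norm_smul, Real.norm_eq_abs, abs_of_pos (by positivity : (0:ℝ) < 1 + μ)]
      calc (1 + μ) * ‖(1 + μ)⁻¹ • (T z + w) - z‖ ≤ (1 + μ) * (δ / (1 + μ)) :=
            mul_le_mul_of_nonneg_left hz (by positivity)
        _ = δ := by field_simp
    set r : ℝ := ‖z‖ with hr
    have hr0 : 0 ≤ r := norm_nonneg _
    -- main estimate: μ r² ≤ δ r + M μ r + K
    have hA : 0 ≤ ⟪(z - T z) - u, z - x⟫_ℝ := by rw [← hx]; exact mono z x
    have hB : 0 ≤ ⟪(z - T z) - v, z - y⟫_ℝ := by rw [← hy]; exact mono z y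
    have hcomb : a • ((z - T z) - u) + b • ((z - T z) - v) = e - μ • z := by
      rw [he, hw]
      have hb1 : b = 1 - a := by linarith
      rw [hb1]; module
    have hexp : a * ⟪(z - T z) - u, z⟫_ℝ + b * ⟪(z - T z) - v, z⟫_ℝ
        = ⟪e, z⟫_ℝ - μ * r ^ 2 := by
      rw [← real_inner_smul_left, ← real_inner_smul_left, ← inner_add_left, hcomb,
        inner_sub_left, real_inner_smul_left, real_inner_self_eq_norm_sq]
    have hx1 : ⟪(z - T z) - u, z - x⟫_ℝ = ⟪(z - T z) - u, z⟫_ℝ - ⟪(z - T z) - u, x⟫_ℝ :=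
      inner_sub_right _ _ _
    have hy1 : ⟪(z - T z) - v, z - y⟫_ℝ = ⟪(z - T z) - v, z⟫_ℝ - ⟪(z - T z) - v, y⟫_ℝ :=
      inner_sub_right _ _ _
    have heznorm : ⟪e, z⟫_ℝ ≤ δ * r := by
      calc ⟪e, z⟫_ℝ ≤ ‖e‖ * ‖z‖ := real_inner_le_norm _ _
        _ ≤ δ * r := mul_le_mul_of_nonneg_right hee hr0
    have hFu : ‖(z - T z) - u‖ ≤ ‖w - u‖ + δ + μ * r := by
      have h2 : (z - T z) - u = (w - u) + (e - μ • z) := by rw [he]; abel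
      calc ‖(z - T z) - u‖ = ‖(w - u) + (e - μ • z)‖ := by rw [h2]
        _ ≤ ‖w - u‖ + ‖e - μ • z‖ := norm_add_le _ _
        _ ≤ ‖w - u‖ + (‖e‖ + ‖μ • z‖) := by linarith [norm_sub_le e (μ • z)]
        _ ≤ ‖w - u‖ + δ + μ * r := by
            rw [norm_smul, Real.norm_eq_abs, abs_of_pos hμ0]; linarith
    have hFv : ‖(z - T z) - v‖ ≤ ‖w - v‖ + δ + μ * r := by
      have h2 : (z - T z) - v = (w - v) + (e - μ • z) := by rw [he]; abel
      calc ‖(z - T z) - v‖ = ‖(w - v) + (e - μ • z)‖ := by rw [h2]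
        _ ≤ ‖w - v‖ + ‖e - μ • z‖ := norm_add_le _ _
        _ ≤ ‖w - v‖ + (‖e‖ + ‖μ • z‖) := by linarith [norm_sub_le e (μ • z)]
        _ ≤ ‖w - v‖ + δ + μ * r := by
            rw [norm_smul, Real.norm_eq_abs, abs_of_pos hμ0]; linarith
    have hpx : -⟪(z - T z) - u, x⟫_ℝ ≤ (‖w - u‖ + δ + μ * r) * ‖x‖ := by
      calc -⟪(z - T z) - u, x⟫_ℝ ≤ |⟪(z - T z) - u, x⟫_ℝ| := neg_le_abs _
        _ ≤ ‖(z - T z) - u‖ * ‖x‖ := abs_real_inner_le_norm _ _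
        _ ≤ (‖w - u‖ + δ + μ * r) * ‖x‖ := mul_le_mul_of_nonneg_right hFu (norm_nonneg _)
    have hpy : -⟪(z - T z) - v, y⟫_ℝ ≤ (‖w - v‖ + δ + μ * r) * ‖y‖ := by
      calc -⟪(z - T z) - v, y⟫_ℝ ≤ |⟪(z - T z) - v, y⟫_ℝ| := neg_le_abs _
        _ ≤ ‖(z - T z) - v‖ * ‖y‖ := abs_real_inner_le_norm _ _
        _ ≤ (‖w - v‖ + δ + μ * r) * ‖y‖ := mul_le_mul_of_nonneg_right hFv (norm_nonneg _)
    have hax : a * -⟪(z - T z) - u, x⟫_ℝ ≤ a * ((‖w - u‖ + δ + μ * r) * ‖x‖) :=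
      mul_le_mul_of_nonneg_left hpx ha
    have hby : b * -⟪(z - T z) - v, y⟫_ℝ ≤ b * ((‖w - v‖ + δ + μ * r) * ‖y‖) :=
      mul_le_mul_of_nonneg_left hpy hb
    have ineq1 : μ * r ^ 2 ≤ δ * r + a * ((‖w - u‖ + δ + μ * r) * ‖x‖)
        + b * ((‖w - v‖ + δ + μ * r) * ‖y‖) := by
      have h0 : 0 ≤ a * ⟪(z - T z) - u, z - x⟫_ℝ + b * ⟪(z - T z) - v, z - y⟫_ℝ :=
        add_nonneg (mul_nonneg ha hA) (mul_nonneg hb hB)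
      rw [hx1, hy1] at h0
      rw [mul_sub, mul_sub] at h0
      linarith [hexp, heznorm, hax, hby, mul_neg a ⟪(z - T z) - u, x⟫_ℝ,
        mul_neg b ⟪(z - T z) - v, y⟫_ℝ]
    -- simplify bound on the constant part
    have ha1 : a ≤ 1 := by linarith
    have hb1 : b ≤ 1 := by linarith
    have hwu : ‖w - u‖ ≤ ‖w‖ + ‖u‖ := norm_sub_le _ _
    have hwv : ‖w - v‖ ≤ ‖w‖ + ‖v‖ := norm_sub_le _ _
    have ineq2 : μ * r ^ 2 ≤ δ * r + M * (μ * r) + K := by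
      have c1 : a * ((‖w - u‖ + δ + μ * r) * ‖x‖) ≤ (‖w‖ + ‖u‖ + 1 + μ * r) * ‖x‖ := by
        have e1 : (‖w - u‖ + δ + μ * r) * ‖x‖ ≤ (‖w‖ + ‖u‖ + 1 + μ * r) * ‖x‖ := by
          apply mul_le_mul_of_nonneg_right _ (norm_nonneg _); linarith
        have e2 : a * ((‖w - u‖ + δ + μ * r) * ‖x‖) ≤ 1 * ((‖w - u‖ + δ + μ * r) * ‖x‖) := by
          apply mul_le_mul_of_nonneg_right ha1
          have : 0 ≤ μ * r := mul_nonneg hμ0.le hr0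
          positivity
        rw [one_mul] at e2; linarith
      have c2 : b * ((‖w - v‖ + δ + μ * r) * ‖y‖) ≤ (‖w‖ + ‖v‖ + 1 + μ * r) * ‖y‖ := by
        have e1 : (‖w - v‖ + δ + μ * r) * ‖y‖ ≤ (‖w‖ + ‖v‖ + 1 + μ * r) * ‖y‖ := by
          apply mul_le_mul_of_nonneg_right _ (norm_nonneg _); linarith
        have e2 : b * ((‖w - v‖ + δ + μ * r) * ‖y‖) ≤ 1 * ((‖w - v‖ + δ + μ * r) * ‖y‖) := by
          apply mul_le_mul_of_nonneg_right hb1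
          have : 0 ≤ μ * r := mul_nonneg hμ0.le hr0
          positivity
        rw [one_mul] at e2; linarith
      have c3 : (‖w‖ + ‖u‖ + 1 + μ * r) * ‖x‖ + (‖w‖ + ‖v‖ + 1 + μ * r) * ‖y‖
          ≤ M * (μ * r) + K := by
        rw [hM, hK]
        nlinarith [norm_nonneg x, norm_nonneg y, norm_nonneg u, norm_nonneg v, norm_nonneg w,
          mul_nonneg hμ0.le hr0]
      linarith [ineq1]
    set q : ℝ := μ * r with hq
    have hq0 : 0 ≤ q := mul_nonneg hμ0.le hr0
    have hq2 : q ^ 2 ≤ δ * q + (μ * M) * q + μ * K := by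
      have := mul_le_mul_of_nonneg_left ineq2 hμ0.le
      nlinarith [this]
    have hqε : q ≤ ε / 2 := by
      by_contra hcon
      push_neg at hcon
      have hqq : ε / 2 * q ≤ q * q := mul_le_mul_of_nonneg_right hcon.le hq0
      have hεq : ε / 4 * (ε / 2) ≤ ε / 4 * q :=
        mul_le_mul_of_nonneg_left hcon.le (by positivity)
      have hδq : δ * q ≤ ε / 8 * q := mul_le_mul_of_nonneg_right hδε hq0
      have hMq : μ * M * q ≤ ε / 8 * q := mul_le_mul_of_nonneg_right hμM hq0
      have hsq : q ^ 2 = q * q := sq q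
      have hεsq : ε ^ 2 = ε * ε := sq ε
      have hε2 : 0 < ε * ε := mul_pos hε hε
      clear_value q r M K
      linarith [hq2, hδq, hMq, hμK, hqq, hεq, hsq, hεsq, hε2]
    refine ⟨z - T z, ⟨z, rfl⟩, ?_⟩
    rw [dist_eq_norm]
    have hfin : w - (z - T z) = -(e - μ • z) := by rw [he]; abel
    calc ‖w - (z - T z)‖ = ‖e - μ • z‖ := by rw [hfin, norm_neg]
      _ ≤ ‖e‖ + ‖μ • z‖ := norm_sub_le _ _
      _ = ‖e‖ + μ * r := by rw [norm_smul, Real.norm_eq_abs, abs_of_pos hμ0]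
      _ ≤ δ + q := by rw [hq]; linarith
      _ < ε := by linarith
  intro p hp q hq a b ha hb hab
  have hclosed : IsClosed {t : X × X | a • t.1 + b • t.2 ∈ closure S} :=
    IsClosed.preimage ((continuous_fst.const_smul a).add (continuous_snd.const_smul b))
      isClosed_closure
  have hsub : closure S ×ˢ closure S ⊆ {t : X × X | a • t.1 + b • t.2 ∈ closure S} := by
    rw [← closure_prod_eq]
    refine closure_minimal ?_ hclosed
    rintro ⟨u, v⟩ ⟨hu, hv⟩
    exact key a b ha hb hab u hu v hv
  exact hsub (Set.mk_mem_prod hp hq)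
end

section
/- Let T be an averaged operator (T = (1−α)Id + αN, α ∈ (0,1), N nonexpansive) and suppose v ∈ X satisfies v + T has a fixed point and v is the projection of 0 onto the closure of ran(Id − T). Then for every x ∈ X, the series ∑ₙ ‖Tⁿx − Tⁿ⁺¹x − v‖² converges (is finite), and consequently Tⁿx − Tⁿ⁺¹x → v. -/
open scoped RealInnerProductSpace

lemma aux_solve {X : Type*} [NormedAddCommGroup X] [InnerProductSpace ℝ X] [CompleteSpace X]
    (A : X → X) (hmono : ∀ a b : X, 0 ≤ ⟪a - b, A a - A b⟫)
    (hlip : ∀ a b : X, ‖A a - A b‖ ≤ 2 * ‖a - b‖)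
    (c : X) (ε : ℝ) (hε0 : 0 < ε) (hε1 : ε < 1) :
    ∃ w : X, A w + ε • w = c := by
  haveI : Nonempty X := ⟨0⟩
  set γ : ℝ := ε / 9 with hγ
  have hγ0 : 0 < γ := by positivity
  set F : X → X := fun w => w + γ • (c - A w - ε • w) with hF
  have hfac0 : (0:ℝ) ≤ 1 - ε ^ 2 / 9 := by nlinarith
  have key : ∀ w w' : X, ‖F w - F w'‖ ^ 2 ≤ (1 - ε ^ 2 / 9) * ‖w - w'‖ ^ 2 := by
    intro w w'
    have hd : F w - F w' = (w - w') - γ • ((A w - A w') + ε • (w - w')) := by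
      simp only [hF]
      module
    set d := w - w' with hdd
    set g := A w - A w' with hgg
    have e1 : ‖d - γ • (g + ε • d)‖ ^ 2
        = ‖d‖ ^ 2 - 2 * (γ * (⟪d, g⟫ + ε * ‖d‖ ^ 2)) + γ ^ 2 * ‖g + ε • d‖ ^ 2 := by
      rw [norm_sub_sq_real, real_inner_smul_right, norm_smul, inner_add_right,
        real_inner_smul_right, real_inner_self_eq_norm_sq]
      rw [mul_pow, Real.norm_eq_abs, sq_abs]
    have e2 : ‖g + ε • d‖ ^ 2 ≤ 9 * ‖d‖ ^ 2 := by
      have h1 : ‖g + ε • d‖ ≤ 3 * ‖d‖ := by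
        calc ‖g + ε • d‖ ≤ ‖g‖ + ‖ε • d‖ := norm_add_le _ _
        _ ≤ 2 * ‖d‖ + ε * ‖d‖ := by
            rw [norm_smul, Real.norm_eq_abs, abs_of_pos hε0]
            exact add_le_add (hlip w w') le_rfl
        _ ≤ 3 * ‖d‖ := by nlinarith [norm_nonneg d]
      nlinarith [norm_nonneg (g + ε • d), norm_nonneg d]
    have e3 : 0 ≤ ⟪d, g⟫ := hmono w w'
    rw [hd, e1]
    rw [hγ]
    nlinarith [norm_nonneg d, sq_nonneg ‖d‖, mul_le_mul_of_nonneg_left e2 (sq_nonneg ε),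
      mul_nonneg (le_of_lt hε0) e3]
  set k : ℝ := Real.sqrt (1 - ε ^ 2 / 9) with hk
  have hk0 : 0 ≤ k := Real.sqrt_nonneg _
  have hk1 : k < 1 := by
    have h := Real.sqrt_lt_sqrt hfac0 (show 1 - ε ^ 2 / 9 < 1 by nlinarith)
    simpa using h
  have hkd : ∀ w w' : X, dist (F w) (F w') ≤ k * dist w w' := by
    intro w w'
    rw [dist_eq_norm, dist_eq_norm]
    have h1 : ‖F w - F w'‖ = Real.sqrt (‖F w - F w'‖ ^ 2) := by
      rw [Real.sqrt_sq (norm_nonneg _)]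
    rw [h1]
    calc Real.sqrt (‖F w - F w'‖ ^ 2) ≤ Real.sqrt ((1 - ε ^ 2 / 9) * ‖w - w'‖ ^ 2) :=
          Real.sqrt_le_sqrt (key w w')
    _ = k * ‖w - w'‖ := by
        rw [Real.sqrt_mul hfac0, Real.sqrt_sq (norm_nonneg _)]
  have hcon : ContractingWith ⟨k, hk0⟩ F := by
    constructor
    · exact_mod_cast hk1
    · exact LipschitzWith.of_dist_le_mul hkd
  refine ⟨ContractingWith.fixedPoint F hcon, ?_⟩
  have hw := hcon.fixedPoint_isFixedPt
  set w := ContractingWith.fixedPoint F hcon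
  have : w + γ • (c - A w - ε • w) = w := hw
  have h0 : γ • (c - A w - ε • w) = 0 := by
    have := congrArg (fun u => u - w) this
    simpa using this
  have h1 : c - A w - ε • w = 0 := by
    rcases smul_eq_zero.mp h0 with h | h
    · exact absurd h (ne_of_gt hγ0)
    · exact h
  rw [sub_eq_zero] at h1
  rw [← h1]
  abel

lemma aux_comb {X : Type*} [NormedAddCommGroup X] [InnerProductSpace ℝ X]
    (p m r : X) (t ε : ℝ) (ht0 : 0 < t) (ht1 : t < 1) (hε0 : 0 < ε)
    (m1 : 0 ≤ ⟪t • p - r, t • m + ε • r⟫)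
    (m2 : 0 ≤ ⟪(t - 1) • p - r, (t - 1) • m + ε • r⟫) :
    ε * ‖r‖ ^ 2 ≤ t * (1 - t) * ⟪p, m⟫ := by
  have e1 : ⟪t • p - r, t • m + ε • r⟫
      = t ^ 2 * ⟪p, m⟫ + t * ε * ⟪p, r⟫ - t * ⟪r, m⟫ - ε * ‖r‖ ^ 2 := by
    simp only [inner_sub_left, inner_add_right, real_inner_smul_left,
      real_inner_smul_right, real_inner_self_eq_norm_sq]
    ring
  have e2 : ⟪(t - 1) • p - r, (t - 1) • m + ε • r⟫
      = (t - 1) ^ 2 * ⟪p, m⟫ + (t - 1) * ε * ⟪p, r⟫ - (t - 1) * ⟪r, m⟫ - ε * ‖r‖ ^ 2 := by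
    simp only [inner_sub_left, inner_add_right, real_inner_smul_left,
      real_inner_smul_right, real_inner_self_eq_norm_sq]
    ring
  rw [e1] at m1
  rw [e2] at m2
  nlinarith [mul_le_mul_of_nonneg_left m1 (by linarith : (0:ℝ) ≤ 1 - t),
    mul_le_mul_of_nonneg_left m2 (le_of_lt ht0)]

theorem averaged_displacement_tendsto_min_vector
    {X : Type*} [NormedAddCommGroup X] [InnerProductSpace ℝ X] [CompleteSpace X]
    (N : X → X) (hN : ∀ x y : X, ‖N x - N y‖ ≤ ‖x - y‖)
    (α : ℝ) (hα : α ∈ Set.Ioo (0 : ℝ) 1)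
    (T : X → X) (hT : ∀ x : X, T x = (1 - α) • x + α • N x)
    (v : X)
    (hv_mem : v ∈ closure (Set.range fun y : X => y - T y))
    (hv_min : ∀ w ∈ closure (Set.range fun y : X => y - T y), ‖v‖ ≤ ‖w‖)
    (hv_ran : v ∈ Set.range fun y : X => y - T y) :
    ∀ x : X,
      (Summable fun n : ℕ => ‖T^[n] x - T^[n + 1] x - v‖ ^ 2) ∧
      Filter.Tendsto (fun n : ℕ => T^[n] x - T^[n + 1] x) Filter.atTop (nhds v) := by
  obtain ⟨hα0, hα1⟩ := hα
  set A : X → X := fun y => y - T y with hA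
  clear_value A
  obtain ⟨z, hz⟩ := hv_ran
  have hAz : A z = v := hz
  -- A y = α • (y - N y)
  have hAeq : ∀ y : X, A y = α • (y - N y) := by
    intro y
    simp only [hA, hT y]
    module
  -- cocoercivity
  have h2 : ∀ a b : X, ‖A a - A b‖ ^ 2 ≤ 2 * α * ⟪a - b, A a - A b⟫ := by
    intro a b
    have hB : A a - A b = α • ((a - N a) - (b - N b)) := by
      rw [hAeq a, hAeq b]
      module
    set p := a - b with hp
    set q := (a - N a) - (b - N b) with hq
    have hNab : N a - N b = p - q := by simp only [hp, hq]; abel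
    have h1 : ‖N a - N b‖ ^ 2 ≤ ‖p‖ ^ 2 :=
      pow_le_pow_left₀ (norm_nonneg _) (hN a b) 2
    have h2 : ‖p - q‖ ^ 2 = ‖p‖ ^ 2 - 2 * ⟪p, q⟫ + ‖q‖ ^ 2 := norm_sub_sq_real p q
    have hcoB : ‖q‖ ^ 2 ≤ 2 * ⟪p, q⟫ := by rw [hNab] at h1; linarith
    rw [hB, norm_smul, real_inner_smul_right, Real.norm_eq_abs, abs_of_pos hα0, mul_pow]
    nlinarith [sq_nonneg α]
  have hmono : ∀ a b : X, 0 ≤ ⟪a - b, A a - A b⟫ := by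
    intro a b
    nlinarith [h2 a b, sq_nonneg ‖A a - A b‖]
  -- strong nonexpansiveness, κ = (1-α)/α
  set κ : ℝ := (1 - α) / α with hκ
  clear_value κ
  have hκ0 : 0 < κ := by rw [hκ]; exact div_pos (by linarith) hα0
  have h3 : ∀ a b : X, ‖T a - T b‖ ^ 2 ≤ ‖a - b‖ ^ 2 - κ * ‖A a - A b‖ ^ 2 := by
    intro a b
    have hTab : T a - T b = (a - b) - (A a - A b) := by simp only [hA]; abel
    have h1 : ‖(a - b) - (A a - A b)‖ ^ 2
        = ‖a - b‖ ^ 2 - 2 * ⟪a - b, A a - A b⟫ + ‖A a - A b‖ ^ 2 := norm_sub_sq_real _ _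
    have h4 := h2 a b
    have key : (1 - α) / α * ‖A a - A b‖ ^ 2
        ≤ 2 * ⟪a - b, A a - A b⟫ - ‖A a - A b‖ ^ 2 := by
      rw [div_mul_eq_mul_div, div_le_iff₀ hα0]
      nlinarith [h4]
    rw [hTab, h1, hκ]
    linarith
  -- T nonexpansive, A 2-Lipschitz
  have hTnon : ∀ a b : X, ‖T a - T b‖ ≤ ‖a - b‖ := by
    intro a b
    have : T a - T b = (1 - α) • (a - b) + α • (N a - N b) := by
      rw [hT a, hT b]; module
    rw [this]
    calc ‖(1 - α) • (a - b) + α • (N a - N b)‖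
        ≤ ‖(1 - α) • (a - b)‖ + ‖α • (N a - N b)‖ := norm_add_le _ _
      _ = (1 - α) * ‖a - b‖ + α * ‖N a - N b‖ := by
          rw [norm_smul, norm_smul, Real.norm_eq_abs, Real.norm_eq_abs,
            abs_of_pos hα0, abs_of_pos (by linarith : (0:ℝ) < 1 - α)]
      _ ≤ (1 - α) * ‖a - b‖ + α * ‖a - b‖ := by
          have := hN a b; nlinarith
      _ = ‖a - b‖ := by ring
  have hAlip : ∀ a b : X, ‖A a - A b‖ ≤ 2 * ‖a - b‖ := by
    intro a b
    have : A a - A b = (a - b) - (T a - T b) := by simp only [hA]; abel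
    rw [this]
    calc ‖(a - b) - (T a - T b)‖ ≤ ‖a - b‖ + ‖T a - T b‖ := norm_sub_le _ _
      _ ≤ 2 * ‖a - b‖ := by have := hTnon a b; linarith
  -- segment lemma: v + t•(A y - v) ∈ closure (range A)
  have hseg : ∀ (y : X) (t : ℝ), 0 < t → t < 1 →
      v + t • (A y - v) ∈ closure (Set.range A) := by
    intro y t ht0 ht1
    set u := A y with hu
    clear_value u
    set m := u - v with hm
    clear_value m
    set p := y - z with hpdef
    clear_value p
    set c := v + t • m with hc
    clear_value c
    set K₀ : ℝ := t * (1 - t) * ⟪p, m⟫ with hK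
    clear_value K₀
    rw [Metric.mem_closure_iff]
    intro δ hδ
    set M : ℝ := max K₀ 0 + 1 with hM
    clear_value M
    have hM0 : 0 < M := by
      rw [hM]
      have : (0:ℝ) ≤ max K₀ 0 := le_max_right _ _
      linarith
    set ε : ℝ := min (1/2) (δ ^ 2 / (2 * M)) with hε
    clear_value ε
    have hε0 : 0 < ε := by
      rw [hε]
      exact lt_min (by norm_num) (div_pos (pow_pos hδ 2) (by linarith))
    have hε1 : ε < 1 := by
      rw [hε]
      exact lt_of_le_of_lt (min_le_left _ _) (by norm_num)
    set qq := z + t • p with hqq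
    clear_value qq
    obtain ⟨w, hw⟩ := aux_solve A hmono hAlip (c + ε • qq) ε hε0 hε1
    -- A w = c + ε • (qq - w)
    have hAw : A w = c + ε • (qq - w) := by
      have : A w = c + ε • qq - ε • w := by
        rw [← hw]; abel
      rw [this, smul_sub]; abel
    set r := qq - w with hr
    clear_value r
    -- w - z = t • p - r ; w - y = (t-1) • p - r
    have hwz : w - z = t • p - r := by
      simp only [hr, hqq]; abel
    have hwy : w - y = (t - 1) • p - r := by
      simp only [hr, hqq, hpdef]
      module
    -- A w - v = t • m + ε • r ; A w - u = (t-1) • m + ε • r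
    have hAwv : A w - A z = t • m + ε • r := by
      rw [hAz, hAw, hc, hr]; abel
    have hAwu : A w - A y = (t - 1) • m + ε • r := by
      rw [hAw, hc, ← hu, hm, hr]
      module
    have m1 := hmono w z
    have m2 := hmono w y
    rw [hwz, hAwv] at m1
    rw [hwy, hAwu] at m2
    have hkey : ε * ‖r‖ ^ 2 ≤ K₀ := by
      rw [hK]
      exact aux_comb p m r t ε ht0 ht1 hε0 m1 m2
    refine ⟨A w, Set.mem_range_self w, ?_⟩
    have hdist : dist c (A w) = ε * ‖r‖ := by
      rw [dist_eq_norm, hAw]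
      simp only [hr]
      rw [show c - (c + ε • (qq - w)) = -(ε • (qq - w)) by abel, norm_neg, norm_smul,
        Real.norm_eq_abs, abs_of_pos hε0]
    rw [hdist]
    -- (ε‖r‖)^2 = ε * (ε‖r‖²) ≤ ε * K₀ ≤ ε * M ≤ δ²/2 < δ²
    have h5 : (ε * ‖r‖) ^ 2 ≤ ε * K₀ := by
      calc (ε * ‖r‖) ^ 2 = ε * (ε * ‖r‖ ^ 2) := by ring
        _ ≤ ε * K₀ := mul_le_mul_of_nonneg_left hkey hε0.le
    have h6 : ε * K₀ ≤ δ ^ 2 / 2 := by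
      have hKM : K₀ ≤ M := by
        rw [hM]; have := le_max_left K₀ 0; linarith
      have hεle : ε ≤ δ ^ 2 / (2 * M) := hε ▸ min_le_right _ _
      calc ε * K₀ ≤ ε * M := mul_le_mul_of_nonneg_left hKM hε0.le
        _ ≤ (δ ^ 2 / (2 * M)) * M := mul_le_mul_of_nonneg_right hεle hM0.le
        _ = δ ^ 2 / 2 := by field_simp
    have h7 : (ε * ‖r‖) ^ 2 < δ ^ 2 := by
      have hδ2 : 0 < δ ^ 2 := pow_pos hδ 2
      linarith
    exact lt_of_pow_lt_pow_left₀ 2 hδ.le h7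
  -- key inequality: ⟪A y, v⟫ ≥ ‖v‖²
  have h4 : ∀ y : X, ‖v‖ ^ 2 ≤ ⟪A y, v⟫ := by
    intro y
    set m := A y - v with hm
    have hvm : 0 ≤ ⟪v, m⟫ := by
      by_contra hneg
      push_neg at hneg
      set t : ℝ := min (1/2) (-⟪v, m⟫ / (‖m‖ ^ 2 + 1)) with ht
      have hmsq : (0:ℝ) < ‖m‖ ^ 2 + 1 := by positivity
      have ht0 : 0 < t := by
        apply lt_min (by norm_num)
        exact div_pos (by linarith) hmsq
      have ht1 : t < 1 := lt_of_le_of_lt (min_le_left _ _) (by norm_num)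
      have hcl := hseg y t ht0 ht1
      have hminle : ‖v‖ ≤ ‖v + t • m‖ := hv_min _ (by rw [hm]; exact hcl)
      have hexp : ‖v + t • m‖ ^ 2 = ‖v‖ ^ 2 + 2 * (t * ⟪v, m⟫) + t ^ 2 * ‖m‖ ^ 2 := by
        rw [norm_add_sq_real, real_inner_smul_right, norm_smul, Real.norm_eq_abs,
          abs_of_pos ht0, mul_pow]
      have hsq : ‖v‖ ^ 2 ≤ ‖v + t • m‖ ^ 2 := pow_le_pow_left₀ (norm_nonneg _) hminle 2
      have htle : t ≤ -⟪v, m⟫ / (‖m‖ ^ 2 + 1) := min_le_right _ _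
      have h9 : t * (‖m‖ ^ 2 + 1) ≤ -⟪v, m⟫ := by
        rw [le_div_iff₀ hmsq] at htle
        exact htle
      nlinarith [mul_le_mul_of_nonneg_left h9 ht0.le, mul_pos ht0 (neg_pos.2 hneg)]
    have : ⟪v, A y⟫ - ‖v‖ ^ 2 = ⟪v, m⟫ := by
      rw [hm, inner_sub_right, real_inner_self_eq_norm_sq]
    rw [real_inner_comm]
    linarith
  -- main argument
  intro x
  have hzv : z - T z = v := by
    have h := hAz
    rw [hA] at h
    exact h
  have hTz : T z = z - v := by
    rw [← hzv]; abel
  set Φ : ℕ → ℝ := fun n => ‖T^[n] x - z + (n : ℝ) • v‖ ^ 2 with hΦ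
  clear_value Φ
  have hΦnn : ∀ n, 0 ≤ Φ n := fun n => by simp only [hΦ]; positivity
  have key : ∀ n : ℕ, Φ (n + 1) + κ * ‖T^[n] x - T^[n + 1] x - v‖ ^ 2 ≤ Φ n := by
    intro n
    set a := T^[n] x with ha
    clear_value a
    have hit : T^[n + 1] x = T a := by rw [ha, Function.iterate_succ_apply']
    have hAav : A a - A z = a - T a - v := by
      rw [hAz, hA]
    have hda : a - T^[n + 1] x - v = A a - A z := by rw [hit, hAav]
    have hvec : T^[n + 1] x - z + ((n + 1 : ℕ) : ℝ) • v = (T a - T z) + (n : ℝ) • v := by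
      rw [hit, hTz]
      push_cast
      module
    have hexp1 : Φ (n + 1) = ‖T a - T z‖ ^ 2 + 2 * ((n : ℝ) * ⟪T a - T z, v⟫)
        + (n : ℝ) ^ 2 * ‖v‖ ^ 2 := by
      simp only [hΦ]
      rw [hvec, norm_add_sq_real, real_inner_smul_right, norm_smul, Real.norm_eq_abs,
        abs_of_nonneg (Nat.cast_nonneg n), mul_pow]
    have hexp0 : Φ n = ‖a - z‖ ^ 2 + 2 * ((n : ℝ) * ⟪a - z, v⟫)
        + (n : ℝ) ^ 2 * ‖v‖ ^ 2 := by
      simp only [hΦ]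
      rw [← ha, norm_add_sq_real, real_inner_smul_right, norm_smul, Real.norm_eq_abs,
        abs_of_nonneg (Nat.cast_nonneg n), mul_pow]
    have ineq1 : ‖T a - T z‖ ^ 2 ≤ ‖a - z‖ ^ 2 - κ * ‖a - T^[n + 1] x - v‖ ^ 2 := by
      rw [hda]
      exact h3 a z
    have ineq2 : ⟪T a - T z, v⟫ ≤ ⟪a - z, v⟫ := by
      have hsplit : T a - T z = (a - z) - (A a - A z) := by
        rw [hA]
        simp only
        abel
      have hin : ⟪A a - A z, v⟫ = ⟪A a, v⟫ - ‖v‖ ^ 2 := by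
        rw [hAz, inner_sub_left, real_inner_self_eq_norm_sq]
      rw [hsplit, inner_sub_left, hin]
      have := h4 a
      linarith
    have hmul : 2 * ((n : ℝ) * ⟪T a - T z, v⟫) ≤ 2 * ((n : ℝ) * ⟪a - z, v⟫) := by
      have hn : (0 : ℝ) ≤ (n : ℝ) := Nat.cast_nonneg n
      have := mul_le_mul_of_nonneg_left ineq2 hn
      linarith
    rw [hexp1, hexp0]
    linarith
  -- summability
  have hpartial : ∀ M : ℕ, κ * ∑ i ∈ Finset.range M, ‖T^[i] x - T^[i + 1] x - v‖ ^ 2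
      ≤ Φ 0 - Φ M := by
    intro M
    induction M with
    | zero => simp
    | succ M ih =>
      rw [Finset.sum_range_succ, mul_add]
      have := key M
      linarith
  have hsummable : Summable fun n : ℕ => ‖T^[n] x - T^[n + 1] x - v‖ ^ 2 := by
    apply summable_of_sum_range_le (c := Φ 0 / κ)
    · intro n; positivity
    · intro M
      have h := hpartial M
      have h0 := hΦnn M
      rw [le_div_iff₀ hκ0, mul_comm]
      linarith
  refine ⟨hsummable, ?_⟩
  have htend0 : Filter.Tendsto (fun n : ℕ => ‖T^[n] x - T^[n + 1] x - v‖ ^ 2)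
      Filter.atTop (nhds 0) := hsummable.tendsto_atTop_zero
  have htend1 : Filter.Tendsto (fun n : ℕ => ‖T^[n] x - T^[n + 1] x - v‖)
      Filter.atTop (nhds 0) := by
    have h := (Real.continuous_sqrt.tendsto 0).comp htend0
    have heq : (fun n : ℕ => Real.sqrt (‖T^[n] x - T^[n + 1] x - v‖ ^ 2))
        = fun n : ℕ => ‖T^[n] x - T^[n + 1] x - v‖ := by
      funext n
      exact Real.sqrt_sq (norm_nonneg _)
    rw [show (0:ℝ) = Real.sqrt 0 by simp]
    rw [← heq]
    exact h
  rw [tendsto_iff_norm_sub_tendsto_zero]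
  exact htend1
end

section
/- Suppose T : X → X is nonexpansive, v ∈ ran(Id − T) is the minimal displacement vector of T, and the interior of Fix(v + T) is nonempty. Then for every x ∈ X, ∑ₙ ‖Tⁿx − Tⁿ⁺¹x − v‖ < ∞ and the sequence (Tⁿx + n·v)ₙ converges strongly (is Cauchy). -/
open Metric Finset

/-- Key translation lemma: if a ball is contained in `Fix (v + T)`, so is its
translate by `-v`. -/
private lemma ball_translate
    {X : Type*} [NormedAddCommGroup X] [InnerProductSpace ℝ X]
    (T : X → X) (hT : ∀ x y : X, ‖T x - T y‖ ≤ ‖x - y‖)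
    (v : X)
    (hv_min : ∀ w ∈ closure (Set.range fun y : X => y - T y), ‖v‖ ≤ ‖w‖)
    {p : X} {ε : ℝ} (hball : Metric.ball p ε ⊆ {x : X | v + T x = x}) :
    Metric.ball (p - v) ε ⊆ {x : X | v + T x = x} := by
  intro z hz
  have hc : z + v ∈ Metric.ball p ε := by
    have hd : dist (z + v) p = dist z (p - v) := by
      rw [dist_eq_norm, dist_eq_norm]; congr 1; abel
    rw [Metric.mem_ball] at *; rwa [hd]
  set c := z + v with hcdef
  have hz' : z = c - v := by rw [hcdef]; abel
  set δ := ε - dist c p with hδdef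
  have hδ : 0 < δ := by rw [hδdef]; rw [Metric.mem_ball] at hc; linarith
  have hsub : Metric.ball c δ ⊆ Metric.ball p ε := by
    intro y hy
    rw [Metric.mem_ball] at *
    calc dist y p ≤ dist y c + dist c p := dist_triangle _ _ _
      _ < δ + dist c p := by linarith
      _ = ε := by rw [hδdef]; ring
  have hcfix : T c = c - v := by
    have h := hball (hsub (Metric.mem_ball_self hδ))
    simp only [Set.mem_setOf_eq] at h
    rw [eq_sub_iff_add_eq, add_comm]; exact h
  set w := (c - v) - T (c - v) with hwdef
  -- `‖w‖ ≤ ‖v‖` by nonexpansiveness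
  have h1 : ‖w‖ ≤ ‖v‖ := by
    have h := hT c (c - v)
    rw [hcfix] at h
    have e : c - (c - v) = v := by abel
    rw [e] at h
    exact h
  -- `‖v‖ ≤ ‖w‖` by minimality
  have h2 : ‖v‖ ≤ ‖w‖ :=
    hv_min w (subset_closure ⟨c - v, rfl⟩)
  -- for all small u, ‖u + w‖ ≤ ‖u + v‖
  have h3 : ∀ u : X, ‖u‖ < δ → ‖u + w‖ ≤ ‖u + v‖ := by
    intro u hu
    have hmem : c + u ∈ Metric.ball c δ := by
      rw [Metric.mem_ball, dist_eq_norm]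
      simpa using hu
    have hfix : T (c + u) = c + u - v := by
      have h := hball (hsub hmem)
      simp only [Set.mem_setOf_eq] at h
      rw [eq_sub_iff_add_eq, add_comm]; exact h
    have h := hT (c + u) (c - v)
    rw [hfix] at h
    have e1 : c + u - v - T (c - v) = u + w := by rw [hwdef]; abel
    have e2 : c + u - (c - v) = u + v := by abel
    rw [e1, e2] at h
    exact h
  -- conclude w = v
  have hwv : w = v := by
    by_contra hne
    have hd0 : 0 < ‖w - v‖ := by
      rw [norm_pos_iff]; exact sub_ne_zero.mpr hne
    set u := (δ / (2 * ‖w - v‖)) • (w - v) with hudef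
    have hcoef : 0 < δ / (2 * ‖w - v‖) := by positivity
    have hun : ‖u‖ < δ := by
      have e : ‖u‖ = δ / 2 := by
        rw [hudef, norm_smul, Real.norm_eq_abs, abs_of_pos hcoef]
        field_simp
      rw [e]; linarith
    have h := h3 u hun
    have hsq : ‖u + w‖ ^ 2 ≤ ‖u + v‖ ^ 2 :=
      pow_le_pow_left₀ (norm_nonneg _) h 2
    rw [norm_add_sq_real, norm_add_sq_real] at hsq
    have hiw : inner ℝ u w - inner ℝ u v = (inner ℝ u (w - v) : ℝ) := by
      exact (inner_sub_right _ _ _).symm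
    have hinner : (inner ℝ u (w - v) : ℝ) = (δ / (2 * ‖w - v‖)) * ‖w - v‖ ^ 2 := by
      rw [hudef, real_inner_smul_left, real_inner_self_eq_norm_sq]
    have hpos : (0:ℝ) < (δ / (2 * ‖w - v‖)) * ‖w - v‖ ^ 2 := by positivity
    nlinarith [hsq, hiw, hinner, hpos, h1, h2, norm_nonneg w, norm_nonneg v]
  -- finish
  show v + T z = z
  rw [hz']
  have : T (c - v) = c - v - w := by rw [hwdef]; abel
  rw [this, hwv]
  abel

/-- Fejér monotone with respect to a ball: quantitative decrease. -/
private lemma fejer_ball_ineq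
    {X : Type*} [NormedAddCommGroup X] [InnerProductSpace ℝ X]
    (x y p : X) (ε : ℝ) (hε : 0 < ε)
    (h : ∀ c ∈ Metric.ball p ε, ‖y - c‖ ≤ ‖x - c‖) :
    ε * ‖x - y‖ ≤ ‖x - p‖ ^ 2 - ‖y - p‖ ^ 2 := by
  have hp : ‖y - p‖ ≤ ‖x - p‖ := h p (Metric.mem_ball_self hε)
  by_cases hxy : x = y
  · simp [hxy]
  · have hd0 : 0 < ‖x - y‖ := by rw [norm_pos_iff]; exact sub_ne_zero.mpr hxy
    set u := ‖x - y‖⁻¹ • (x - y) with hudef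
    have hun : ‖u‖ = 1 := by
      rw [hudef, norm_smul, Real.norm_eq_abs, abs_of_pos (by positivity)]
      field_simp
    set c := p + (ε / 2) • u with hcdef
    have hcmem : c ∈ Metric.ball p ε := by
      rw [Metric.mem_ball, dist_eq_norm, hcdef]
      have e : p + (ε / 2) • u - p = (ε / 2) • u := by abel
      rw [e, norm_smul, Real.norm_eq_abs, abs_of_pos (by positivity), hun]
      linarith
    have hle := h c hcmem
    have hsq : ‖y - c‖ ^ 2 ≤ ‖x - c‖ ^ 2 := pow_le_pow_left₀ (norm_nonneg _) hle 2
    have ey : y - c = (y - p) - (ε / 2) • u := by rw [hcdef]; abel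
    have ex : x - c = (x - p) - (ε / 2) • u := by rw [hcdef]; abel
    rw [ey, ex, norm_sub_sq_real (y - p) ((ε / 2) • u),
      norm_sub_sq_real (x - p) ((ε / 2) • u)] at hsq
    have hixy : (inner ℝ (x - p) ((ε/2) • u) : ℝ) - inner ℝ (y - p) ((ε/2) • u)
        = (ε/2) * ‖x - y‖ := by
      rw [← inner_sub_left]
      have e : (x - p) - (y - p) = x - y := by abel
      rw [e, real_inner_smul_right, hudef, real_inner_smul_right,
        real_inner_self_eq_norm_sq]
      field_simp
    linarith [hsq, hixy]

theorem interior_fix_nonempty_implies_convergence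
    {X : Type*} [NormedAddCommGroup X] [InnerProductSpace ℝ X] [CompleteSpace X]
    (T : X → X) (hT : ∀ x y : X, ‖T x - T y‖ ≤ ‖x - y‖)
    (v : X)
    (hv_mem : v ∈ closure (Set.range fun y : X => y - T y))
    (hv_min : ∀ w ∈ closure (Set.range fun y : X => y - T y), ‖v‖ ≤ ‖w‖)
    (hv_ran : v ∈ Set.range fun y : X => y - T y)
    (hint : (interior {x : X | v + T x = x}).Nonempty) :
    ∀ x : X,
      (Summable fun n : ℕ => ‖T^[n] x - T^[n + 1] x - v‖) ∧
      ∃ l : X, Filter.Tendsto (fun n : ℕ => T^[n] x + n • v) Filter.atTop (nhds l) := by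
  intro x
  obtain ⟨p, hp⟩ := hint
  obtain ⟨ε, hε, hball⟩ := Metric.isOpen_iff.mp isOpen_interior p hp
  replace hball : Metric.ball p ε ⊆ {x : X | v + T x = x} :=
    hball.trans interior_subset
  -- translated balls are in Fix
  have hballn : ∀ n : ℕ, Metric.ball (p - n • v) ε ⊆ {x : X | v + T x = x} := by
    intro n
    induction n with
    | zero => simpa using hball
    | succ n ih =>
        have := ball_translate T hT v hv_min ih
        have e : p - n • v - v = p - (n + 1) • v := by
          rw [succ_nsmul]; abel
        rwa [e] at this
  -- iterates of points in the ball
  have hiter : ∀ c ∈ Metric.ball p ε, ∀ n : ℕ, T^[n] c = c - n • v := by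
    intro c hc n
    induction n with
    | zero => simp
    | succ n ih =>
        rw [Function.iterate_succ_apply', ih]
        have hmem : c - n • v ∈ Metric.ball (p - n • v) ε := by
          rw [Metric.mem_ball, dist_sub_right]
          exact hc
        have h := hballn n hmem
        simp only [Set.mem_setOf_eq] at h
        have h' : T (c - n • v) = c - n • v - v := by
          rw [eq_sub_iff_add_eq, add_comm]; exact h
        rw [h', succ_nsmul, sub_add_eq_sub_sub]
  -- the shifted sequence
  set s : ℕ → X := fun n => T^[n] x + n • v with hsdef
  -- Fejér monotonicity
  have hfejer : ∀ n : ℕ, ∀ c ∈ Metric.ball p ε, ‖s (n + 1) - c‖ ≤ ‖s n - c‖ := by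
    intro n c hc
    have h := hT (T^[n] x) (T^[n] c)
    rw [← Function.iterate_succ_apply' T n x, ← Function.iterate_succ_apply' T n c] at h
    rw [hiter c hc n, hiter c hc (n + 1)] at h
    have e1 : T^[n + 1] x - (c - (n + 1) • v) = s (n + 1) - c := by
      rw [hsdef]; simp only; abel
    have e2 : T^[n] x - (c - n • v) = s n - c := by
      rw [hsdef]; simp only; abel
    rwa [e1, e2] at h
  -- quantitative decrease
  have hdec : ∀ n : ℕ, ε * ‖s n - s (n + 1)‖ ≤ ‖s n - p‖ ^ 2 - ‖s (n + 1) - p‖ ^ 2 :=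
    fun n => fejer_ball_ineq (s n) (s (n + 1)) p ε hε (hfejer n)
  -- summability of the consecutive differences
  have hsum : Summable fun n : ℕ => ‖s n - s (n + 1)‖ := by
    apply summable_of_sum_range_le (c := ‖s 0 - p‖ ^ 2 / ε)
      (fun n => norm_nonneg _)
    intro n
    have htel : ∑ i ∈ Finset.range n, (‖s i - p‖ ^ 2 - ‖s (i + 1) - p‖ ^ 2)
        = ‖s 0 - p‖ ^ 2 - ‖s n - p‖ ^ 2 := Finset.sum_range_sub' _ n
    have hb : ε * ∑ i ∈ Finset.range n, ‖s i - s (i + 1)‖ ≤ ‖s 0 - p‖ ^ 2 := by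
      rw [Finset.mul_sum]
      calc ∑ i ∈ Finset.range n, ε * ‖s i - s (i + 1)‖
          ≤ ∑ i ∈ Finset.range n, (‖s i - p‖ ^ 2 - ‖s (i + 1) - p‖ ^ 2) :=
            Finset.sum_le_sum fun i _ => hdec i
        _ = ‖s 0 - p‖ ^ 2 - ‖s n - p‖ ^ 2 := htel
        _ ≤ ‖s 0 - p‖ ^ 2 := by nlinarith [sq_nonneg ‖s n - p‖]
    rw [le_div_iff₀ hε]
    linarith [hb]
  -- identify the summand
  have hsummand : ∀ n : ℕ, ‖s n - s (n + 1)‖ = ‖T^[n] x - T^[n + 1] x - v‖ := by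
    intro n
    congr 1
    rw [hsdef]; simp only
    rw [succ_nsmul]; abel
  constructor
  · have := hsum
    simp_rw [hsummand] at this
    exact this
  · -- Cauchy, hence convergent
    have hcs : CauchySeq s := by
      apply cauchySeq_of_summable_dist
      simpa [dist_eq_norm] using hsum
    obtain ⟨l, hl⟩ := cauchySeq_tendsto_of_complete hcs
    exact ⟨l, by simpa [hsdef] using hl⟩
end

section
/- Let A : X → X be firmly nonexpansive and B : X ⇉ X maximally monotone. If z₁ and z₂ are both zeros of A + B, then Az₁ = Az₂ (i.e., A is constant on the zero set of A + B, so the Attouch–Théra dual solution set K = A(zer(A+B)) is at most a singleton). -/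
open scoped RealInnerProductSpace

theorem A_constant_on_zeros
    {X : Type*} [NormedAddCommGroup X] [InnerProductSpace ℝ X]
    (A : X → X) (hA : ∀ x y : X, ‖A x - A y‖ ^ 2 ≤ ⟪x - y, A x - A y⟫)
    (B : X → Set X)
    (hBmono : ∀ x y u v : X, u ∈ B x → v ∈ B y → 0 ≤ ⟪x - y, u - v⟫)
    (z₁ z₂ : X) (hz₁ : -A z₁ ∈ B z₁) (hz₂ : -A z₂ ∈ B z₂) :
    A z₁ = A z₂ := by
  have h1 := hBmono z₁ z₂ _ _ hz₁ hz₂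
  have h2 : (-A z₁ - -A z₂) = -(A z₁ - A z₂) := by abel
  rw [h2, inner_neg_right] at h1
  have h3 := hA z₁ z₂
  have h4 : ‖A z₁ - A z₂‖ ^ 2 ≤ 0 := by linarith
  have : A z₁ - A z₂ = 0 := by
    have := sq_nonneg ‖A z₁ - A z₂‖
    have hn : ‖A z₁ - A z₂‖ = 0 := by nlinarith
    exact norm_eq_zero.mp hn
  exact sub_eq_zero.mp this
end

section
/- Let A : X → X be firmly nonexpansive and B maximally monotone. For every w ∈ X, the following are equivalent: (i) there exists x with w ∈ Ax + B(x − w); (ii) w ∈ ran(Id − T_FB) where T_FB = J_B(Id − A); in other words, the w-perturbed problem has a solution iff w is a displacement value of the forward-backward operator. -/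
open scoped RealInnerProductSpace

theorem perturbed_problem_solvable_iff_displacement
    {X : Type*} [NormedAddCommGroup X] [InnerProductSpace ℝ X] [CompleteSpace X]
    (A : X → X) (hA : ∀ x y : X, ‖A x - A y‖ ^ 2 ≤ ⟪x - y, A x - A y⟫)
    (B : X → Set X)
    (hBmono : ∀ x y u v : X, u ∈ B x → v ∈ B y → 0 ≤ ⟪x - y, u - v⟫)
    (hBmax : ∀ x u : X, (∀ y v : X, v ∈ B y → 0 ≤ ⟪x - y, u - v⟫) → u ∈ B x)
    (JB : X → X) (hJB : ∀ x z : X, JB x = z ↔ x - z ∈ B z) :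
    ∀ w : X,
      (∃ x : X, ∃ b ∈ B (x - w), A x + b = w) ↔
      w ∈ Set.range (fun x : X => x - JB (x - A x)) := by
  intro w
  constructor
  · rintro ⟨x, b, hb, hab⟩
    refine ⟨x, ?_⟩
    have : JB (x - A x) = x - w := by
      rw [hJB]
      have : x - A x - (x - w) = b := by
        rw [← hab]; abel
      rwa [this]
    simp [this]
  · rintro ⟨x, hx⟩
    have hm : x - A x - JB (x - A x) ∈ B (JB (x - A x)) := (hJB _ _).mp rfl
    have hxw : x - w = JB (x - A x) := by rw [← hx]; exact sub_sub_cancel x (JB (x - A x))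
    have heq : A x + (x - A x - JB (x - A x)) = w := by rw [← hx]; abel
    exact ⟨x, x - A x - JB (x - A x), hxw ▸ hm, heq⟩
end

section
/- Let A : X → X be firmly nonexpansive and B maximally monotone. Then ran(Id − T_DR) = ran(Id − T_FB), where T_DR := Id − J_A + J_B R_A (Douglas–Rachford) and T_FB := J_B(Id − A) (forward-backward); consequently the minimal displacement vectors of T_DR and T_FB coincide. -/
open scoped RealInnerProductSpace

theorem ran_displacement_DR_eq_FB
    {X : Type*} [NormedAddCommGroup X] [InnerProductSpace ℝ X] [CompleteSpace X]
    (A : X → X) (hA : ∀ x y : X, ‖A x - A y‖ ^ 2 ≤ ⟪x - y, A x - A y⟫)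
    (B : X → Set X)
    (hBmono : ∀ x y u v : X, u ∈ B x → v ∈ B y → 0 ≤ ⟪x - y, u - v⟫)
    (hBmax : ∀ x u : X, (∀ y v : X, v ∈ B y → 0 ≤ ⟪x - y, u - v⟫) → u ∈ B x)
    (JA : X → X) (hJA : ∀ x z : X, JA x = z ↔ z + A z = x)
    (JB : X → X) (hJB : ∀ x z : X, JB x = z ↔ x - z ∈ B z)
    (TDR TFB : X → X)
    (hTDR : ∀ x : X, TDR x = x - JA x + JB (2 • JA x - x))
    (hTFB : ∀ x : X, TFB x = JB (x - A x)) :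
    (Set.range fun x : X => x - TDR x) = (Set.range fun x : X => x - TFB x) ∧
    ∀ v : X,
      ((v ∈ closure (Set.range fun x : X => x - TDR x) ∧
          ∀ w ∈ closure (Set.range fun x : X => x - TDR x), ‖v‖ ≤ ‖w‖) ↔
       (v ∈ closure (Set.range fun x : X => x - TFB x) ∧
          ∀ w ∈ closure (Set.range fun x : X => x - TFB x), ‖v‖ ≤ ‖w‖)) := by
  have hran : (Set.range fun x : X => x - TDR x) = (Set.range fun x : X => x - TFB x) := by
    ext w
    constructor
    · rintro ⟨x, rfl⟩
      refine ⟨JA x, ?_⟩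
      have hx : JA x + A (JA x) = x := (hJA x (JA x)).mp rfl
      have harg : (2 : ℕ) • JA x - x = JA x - A (JA x) := by
        rw [two_smul]; nth_rewrite 3 [← hx]; abel
      simp only [hTFB, hTDR, harg]
      abel
    · rintro ⟨x, rfl⟩
      refine ⟨x + A x, ?_⟩
      have hx : JA (x + A x) = x := (hJA _ x).mpr rfl
      have harg : (2 : ℕ) • JA (x + A x) - (x + A x) = x - A x := by
        rw [hx, two_smul]; abel
      simp only [hTFB, hTDR, harg, hx]
      abel
  exact ⟨hran, fun v => by rw [hran]⟩
end

section
/- Let L : X → X be linear and nonexpansive, b ∈ X, and T : x ↦ Lx + b. Suppose v := P_{cl ran(Id−T)}(0) satisfies v ∈ ran(Id − T), and let a ∈ X be such that v + b = a − La. Then for all n ∈ ℕ and x ∈ X: Tⁿx + n·v = (v + T)ⁿ x = a + Lⁿ(x − a), and Fix(v + T) = a + Fix L. -/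
open RealInnerProductSpace


theorem affine_iterates_formula
    {X : Type*} [NormedAddCommGroup X] [InnerProductSpace ℝ X] [CompleteSpace X]
    (L : X →ₗ[ℝ] X) (hL : ∀ x : X, ‖L x‖ ≤ ‖x‖)
    (b : X) (T : X → X) (hT : ∀ x : X, T x = L x + b)
    (v : X)
    (hv_mem : v ∈ closure (Set.range fun y : X => y - T y))
    (hv_min : ∀ w ∈ closure (Set.range fun y : X => y - T y), ‖v‖ ≤ ‖w‖)
    (hv_ran : v ∈ Set.range fun y : X => y - T y)
    (a : X) (ha : v + b = a - L a) :
    (∀ (x : X) (n : ℕ),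
        T^[n] x + n • v = (fun y : X => v + T y)^[n] x ∧
        (fun y : X => v + T y)^[n] x = a + (⇑L)^[n] (x - a)) ∧
    {x : X | v + T x = x} = (fun z : X => a + z) '' {z : X | L z = z} := by
  -- First, L v = v
  have hLv : L v = v := by
    obtain ⟨y, hy⟩ := hv_ran
    simp only at hy
    rw [hT] at hy
    have hmem : ∀ t : ℝ, v + t • (v - L v) ∈ Set.range fun y : X => y - T y := by
      intro t
      refine ⟨y + t • v, ?_⟩
      show y + t • v - T (y + t • v) = _
      rw [hT, map_add, map_smul, ← hy]
      module
    have horth : ⟪v, v - L v⟫ = 0 := by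
      by_contra h
      set c := ⟪v, v - L v⟫ with hc
      have hq : ∀ t : ℝ, 0 ≤ 2 * t * c + t ^ 2 * ‖v - L v‖ ^ 2 := by
        intro t
        have h1 := hv_min _ (subset_closure (hmem t))
        have h2 : ‖v‖ ^ 2 ≤ ‖v + t • (v - L v)‖ ^ 2 := by
          exact pow_le_pow_left₀ (norm_nonneg _) h1 2
        rw [norm_add_sq_real, real_inner_smul_right, norm_smul, mul_pow] at h2
        simp only [Real.norm_eq_abs, sq_abs] at h2
        rw [← hc] at h2
        nlinarith
      have h5 := hq (-c / (‖v - L v‖ ^ 2 + 1))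
      have hm2 : (0:ℝ) ≤ ‖v - L v‖ ^ 2 := sq_nonneg _
      have hc2 : (0:ℝ) < c ^ 2 := by positivity
      have hd : (0:ℝ) < ‖v - L v‖ ^ 2 + 1 := by linarith
      have h7 : 0 ≤ (2 * (-c / (‖v - L v‖ ^ 2 + 1)) * c +
          (-c / (‖v - L v‖ ^ 2 + 1)) ^ 2 * ‖v - L v‖ ^ 2) * (‖v - L v‖ ^ 2 + 1) ^ 2 :=
        mul_nonneg h5 (le_of_lt (pow_pos hd 2))
      have h8 : (2 * (-c / (‖v - L v‖ ^ 2 + 1)) * c +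
          (-c / (‖v - L v‖ ^ 2 + 1)) ^ 2 * ‖v - L v‖ ^ 2) * (‖v - L v‖ ^ 2 + 1) ^ 2 =
          -2 * c ^ 2 * (‖v - L v‖ ^ 2 + 1) + c ^ 2 * ‖v - L v‖ ^ 2 := by
        field_simp
      rw [h8] at h7
      nlinarith
    have hvv : ⟪v, v⟫ = ⟪v, L v⟫ := by
      rw [inner_sub_right] at horth; linarith
    have hnorm : ‖v - L v‖ ^ 2 ≤ 0 := by
      have h3 : ‖L v‖ ^ 2 ≤ ‖v‖ ^ 2 := pow_le_pow_left₀ (norm_nonneg _) (hL v) 2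
      rw [norm_sub_sq_real, ← hvv, real_inner_self_eq_norm_sq]
      linarith
    have : v - L v = 0 := by
      have := norm_nonneg (v - L v)
      have : ‖v - L v‖ = 0 := by nlinarith
      simpa using this
    rw [sub_eq_zero] at this
    exact this.symm
  have hstep : ∀ x : X, v + T x = a + L (x - a) := by
    intro x
    rw [hT, map_sub, show v + (L x + b) = (v + b) + L x by abel, ha]
    abel
  have hB : ∀ (x : X) (n : ℕ),
      (fun y : X => v + T y)^[n] x = a + (⇑L)^[n] (x - a) := by
    intro x n
    induction n with
    | zero => simp
    | succ n ih =>
        rw [Function.iterate_succ_apply', ih, hstep,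
          Function.iterate_succ_apply']
        simp
  have hA : ∀ (x : X) (n : ℕ),
      T^[n] x + n • v = (fun y : X => v + T y)^[n] x := by
    intro x n
    induction n with
    | zero => simp
    | succ n ih =>
        rw [Function.iterate_succ_apply', Function.iterate_succ_apply', ← ih,
          hT, hT, map_add, map_nsmul, hLv, succ_nsmul]
        abel
  refine ⟨fun x n => ⟨hA x n, hB x n⟩, ?_⟩
  ext x
  simp only [Set.mem_setOf_eq, Set.mem_image]
  constructor
  · intro hx
    refine ⟨x - a, ?_, by abel⟩
    have := hstep x
    rw [hx] at this
    have : L (x - a) = x - a := by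
      have := this.symm
      rw [eq_comm, ← sub_eq_iff_eq_add'] at this
      exact this.symm
    exact this
  · rintro ⟨z, hz, rfl⟩
    rw [hstep, add_sub_cancel_left, hz]
end
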